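/- Let W be a nonempty convex subset of ℝ^N, let R : ℝ^N → ℝ be convex and differentiable on an open set containing W, and let g_1, …, g_T ∈ ℝ^N. For t = 1, …, T+1 define Φ_t(w) = ⟨w, Σ_{s<t} g_s⟩ + R(w), and suppose w_t ∈ W is a minimizer of Φ_t over W for every t. Then for every w* ∈ W: Σ_{t=1}^T ⟨g_t, w_{t+1} − w*⟩ ≤ R(w*) − R(w_1) − Σ_{t=1}^T D_R(w_{t+1}, w_t). -/

import Mathlib

open Finset

/-- **FTRL "be-the-leader" bound.**
Let `W` be a nonempty convex subset of `ℝ^N`, `R` convex and differentiable on an open set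
containing `W`, and `g 0, …, g (T-1)` loss vectors. If `w t` minimizes
`Φ_t(w) = ⟨w, ∑_{s<t} g s⟩ + R w` over `W` for `t = 0, …, T` (this is the 0-indexed version of
`w_1, …, w_{T+1}`), then for every `w* ∈ W`,
`∑_{t<T} ⟨g t, w (t+1) − w*⟩ ≤ R w* − R (w 0) − ∑_{t<T} D_R(w (t+1), w t)`,
where `D_R(u, v) = R u − R v − ⟨∇R v, u − v⟩`. -/
theorem ftrl_be_the_leader {N : ℕ}
    (W : Set (EuclideanSpace ℝ (Fin N))) (hWne : W.Nonempty) (hWconv : Convex ℝ W)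
    (R : EuclideanSpace ℝ (Fin N) → ℝ)
    (U : Set (EuclideanSpace ℝ (Fin N))) (hUopen : IsOpen U) (hWU : W ⊆ U)
    (hRconv : ConvexOn ℝ U R) (hRdiff : ∀ x ∈ U, DifferentiableAt ℝ R x)
    (T : ℕ) (g : ℕ → EuclideanSpace ℝ (Fin N)) (w : ℕ → EuclideanSpace ℝ (Fin N))
    (hwW : ∀ t ≤ T, w t ∈ W)
    (hwmin : ∀ t ≤ T, ∀ q ∈ W,
      (inner ℝ (w t) (∑ s ∈ Finset.range t, g s) : ℝ) + R (w t)
        ≤ (inner ℝ q (∑ s ∈ Finset.range t, g s) : ℝ) + R q)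
    (wstar : EuclideanSpace ℝ (Fin N)) (hws : wstar ∈ W) :
    ∑ t ∈ Finset.range T, (inner ℝ (g t) (w (t + 1) - wstar) : ℝ)
      ≤ R wstar - R (w 0)
        - ∑ t ∈ Finset.range T,
            (R (w (t + 1)) - R (w t)
              - (inner ℝ (gradient R (w t)) (w (t + 1) - w t) : ℝ)) := by
  -- First-order optimality condition at each minimizer `w n`.
  have key : ∀ n ≤ T, ∀ q ∈ W,
      (0 : ℝ) ≤ inner ℝ (∑ s ∈ Finset.range n, g s) (q - w n)
        + inner ℝ (gradient R (w n)) (q - w n) := by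
    intro n hn q hq
    set G : EuclideanSpace ℝ (Fin N) := ∑ s ∈ Finset.range n, g s with hG
    have hwn : w n ∈ W := hwW n hn
    have hdiff : DifferentiableAt ℝ R (w n) := hRdiff (w n) (hWU hwn)
    have hgrad : HasFDerivAt R
        ((InnerProductSpace.toDual ℝ (EuclideanSpace ℝ (Fin N))) (gradient R (w n)))
        (w n) := hasGradientAt_iff_hasFDerivAt.mp hdiff.hasGradientAt
    have hlin : HasFDerivAt (fun p : EuclideanSpace ℝ (Fin N) => (inner ℝ G p : ℝ))
        (innerSL ℝ G) (w n) := (innerSL ℝ G).hasFDerivAt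
    have hfd : HasFDerivAt (fun p : EuclideanSpace ℝ (Fin N) => (inner ℝ G p : ℝ) + R p)
        (innerSL ℝ G +
          (InnerProductSpace.toDual ℝ (EuclideanSpace ℝ (Fin N))) (gradient R (w n)))
        (w n) := hlin.add hgrad
    have hmin : IsMinOn (fun p : EuclideanSpace ℝ (Fin N) => (inner ℝ G p : ℝ) + R p)
        W (w n) := by
      intro p hp
      have h := hwmin n hn p hp
      rw [← hG, real_inner_comm G (w n), real_inner_comm G p] at h
      exact h
    have hcone : q - w n ∈ posTangentConeAt W (w n) :=
      sub_mem_posTangentConeAt_of_segment_subset (hWconv.segment_subset hwn hq)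
    have hloc : IsLocalMinOn
        (fun p : EuclideanSpace ℝ (Fin N) => (inner ℝ G p : ℝ) + R p) W (w n) :=
      hmin.localize
    have := hloc.hasFDerivWithinAt_nonneg hfd.hasFDerivWithinAt hcone
    simpa using this
  -- Main induction: be-the-leader inequality.
  have main : ∀ n ≤ T,
      ∑ t ∈ Finset.range n, ((inner ℝ (g t) (w (t + 1)) : ℝ)
          + (R (w (t + 1)) - R (w t)
            - (inner ℝ (gradient R (w t)) (w (t + 1) - w t) : ℝ))) + R (w 0)
        ≤ (inner ℝ (w n) (∑ s ∈ Finset.range n, g s) : ℝ) + R (w n) := by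
    intro n hn
    induction n with
    | zero => simp
    | succ n ih =>
      have hn' : n ≤ T := Nat.le_of_succ_le hn
      have ihn := ih hn'
      have hk := key n hn' (w (n + 1)) (hwW (n + 1) hn)
      rw [Finset.sum_range_succ, Finset.sum_range_succ, inner_add_right, inner_sub_right]
      rw [inner_sub_right, inner_sub_right] at hk
      have h1 : (inner ℝ (g n) (w (n + 1)) : ℝ) = inner ℝ (w (n + 1)) (g n) :=
        real_inner_comm _ _
      have h2 : (inner ℝ (w n) (∑ s ∈ Finset.range n, g s) : ℝ)
          = inner ℝ (∑ s ∈ Finset.range n, g s) (w n) := real_inner_comm _ _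
      have h3 : (inner ℝ (w (n + 1)) (∑ s ∈ Finset.range n, g s) : ℝ)
          = inner ℝ (∑ s ∈ Finset.range n, g s) (w (n + 1)) := real_inner_comm _ _
      linarith
  have hT := main T le_rfl
  have hmin := hwmin T le_rfl wstar hws
  have hws' : (inner ℝ wstar (∑ s ∈ Finset.range T, g s) : ℝ)
      = ∑ t ∈ Finset.range T, (inner ℝ (g t) wstar : ℝ) := by
    rw [inner_sum]
    exact Finset.sum_congr rfl fun t _ => real_inner_comm _ _
  have hsplit : ∑ t ∈ Finset.range T, (inner ℝ (g t) (w (t + 1) - wstar) : ℝ)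
      = ∑ t ∈ Finset.range T, (inner ℝ (g t) (w (t + 1)) : ℝ)
        - ∑ t ∈ Finset.range T, (inner ℝ (g t) wstar : ℝ) := by
    rw [← Finset.sum_sub_distrib]
    exact Finset.sum_congr rfl fun t _ => inner_sub_right _ _ _
  rw [Finset.sum_add_distrib] at hT
  rw [hsplit]
  linarith
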